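/- Let A and B be m×n binary matrices, let σ be a permutation of {1,…,n}, and let A* and B* be the matrices obtained from A and B, respectively, by reordering their columns in the order given by σ (the same permutation for both). Then, for every integer k ≥ 0, G^k(A,B) is word-representable if and only if G^k(A*,B*) is word-representable. -/

import Mathlib

/-- A word `w` over alphabet `V` represents the graph `G`: every vertex occurs in `w`,
and two distinct vertices are adjacent iff their letters alternate in `w`. -/
def WordRepresents {V : Type*} [DecidableEq V] (w : List V) (G : SimpleGraph V) : Prop :=
  (∀ v : V, v ∈ w) ∧
  ∀ x y : V, x ≠ y →
    (G.Adj x y ↔ (w.filter (fun z => z == x || z == y)).Chain' (· ≠ ·))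

/-- A graph is word-representable if some word represents it. -/
def WordRepresentable {V : Type*} [DecidableEq V] (G : SimpleGraph V) : Prop :=
  ∃ w : List V, WordRepresents w G

/-- The split graph `G(M)` of an `m × n` binary matrix `M`: vertices `Sum.inl j`
(`j : Fin n`) form a clique, vertices `Sum.inr i` (`i : Fin m`) form an independent set,
and `Sum.inr i` is adjacent to `Sum.inl j` iff `M i j = true`. -/
def splitGraph {m n : ℕ} (M : Fin m → Fin n → Bool) : SimpleGraph (Fin n ⊕ Fin m) :=
  SimpleGraph.fromRel (fun x y =>
    match x, y with
    | Sum.inl _, Sum.inl _ => True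
    | Sum.inl j, Sum.inr i => M i j = true
    | _, _ => False)

/-- `morphIter A B k` is the matrix `M^k(A,B)`, obtained from the `1 × 1` matrix `[0]`
by `k` iterations of the 2-dimensional morphism replacing `0` by the block `A`
and `1` by the block `B`. -/
def morphIter {m n : ℕ} (A B : Fin m → Fin n → Bool) :
    (k : ℕ) → Fin (m ^ k) → Fin (n ^ k) → Bool
  | 0, _, _ => false
  | k + 1, i, j =>
    have hm : 0 < m := Nat.pos_of_ne_zero (fun h => by
      have := i.isLt; simp [h] at this)
    have hn : 0 < n := Nat.pos_of_ne_zero (fun h => by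
      have := j.isLt; simp [h] at this)
    have hR : i.val / m < m ^ k :=
      (Nat.div_lt_iff_lt_mul hm).2 (by rw [← pow_succ]; exact i.isLt)
    have hC : j.val / n < n ^ k :=
      (Nat.div_lt_iff_lt_mul hn).2 (by rw [← pow_succ]; exact j.isLt)
    if morphIter A B k ⟨i.val / m, hR⟩ ⟨j.val / n, hC⟩ then
      B ⟨i.val % m, Nat.mod_lt _ hm⟩ ⟨j.val % n, Nat.mod_lt _ hn⟩
    else
      A ⟨i.val % m, Nat.mod_lt _ hm⟩ ⟨j.val % n, Nat.mod_lt _ hn⟩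

/-- `Gk A B k` is the split graph `G^k(A,B) = G(M^k(A,B))`. -/
def Gk {m n : ℕ} (A B : Fin m → Fin n → Bool) (k : ℕ) :
    SimpleGraph (Fin (n ^ k) ⊕ Fin (m ^ k)) :=
  splitGraph (morphIter A B k)

/-- Column permutation lifted to `Fin (n^k)` digit-wise. -/
def colPerm {n : ℕ} (σ : Equiv.Perm (Fin n)) : (k : ℕ) → Equiv.Perm (Fin (n ^ k))
  | 0 => Equiv.refl _
  | k + 1 =>
    (finCongr (pow_succ n k)).trans
      ((finProdFinEquiv.symm.trans
        (((colPerm σ k).prodCongr σ).trans finProdFinEquiv)).trans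
        (finCongr (pow_succ n k).symm))

lemma colPerm_succ_val {n : ℕ} (σ : Equiv.Perm (Fin n)) (k : ℕ) (j : Fin (n ^ (k+1))) :
    (colPerm σ (k+1) j).val
      = (σ (finCongr (pow_succ n k) j).modNat).val
        + n * (colPerm σ k (finCongr (pow_succ n k) j).divNat).val := rfl

lemma morphIter_succ {m n : ℕ} (A B : Fin m → Fin n → Bool) (k : ℕ)
    (i : Fin (m^(k+1))) (j : Fin (n^(k+1)))
    (i' : Fin (m^k)) (j' : Fin (n^k)) (i'' : Fin m) (j'' : Fin n)
    (hi' : (i' : ℕ) = i.val / m) (hj' : (j' : ℕ) = j.val / n)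
    (hi'' : (i'' : ℕ) = i.val % m) (hj'' : (j'' : ℕ) = j.val % n) :
    morphIter A B (k+1) i j
      = if morphIter A B k i' j' then B i'' j'' else A i'' j'' := by
  obtain ⟨a, ha⟩ := i'; obtain ⟨b, hb⟩ := j'
  obtain ⟨c, hc⟩ := i''; obtain ⟨d, hd⟩ := j''
  simp only [Fin.val_mk] at hi' hj' hi'' hj''
  subst hi' hj' hi'' hj''
  rfl

lemma morphIter_perm {m n : ℕ} (A B : Fin m → Fin n → Bool) (σ : Equiv.Perm (Fin n)) :
    ∀ (k : ℕ) (i : Fin (m^k)) (j : Fin (n^k)),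
      morphIter (fun i j => A i (σ j)) (fun i j => B i (σ j)) k i j
        = morphIter A B k i (colPerm σ k j)
  | 0, _, _ => rfl
  | k+1, i, j => by
    have hm : 0 < m := Nat.pos_of_ne_zero (fun h => by
      have := i.isLt; simp [h] at this)
    have hn : 0 < n := Nat.pos_of_ne_zero (fun h => by
      have := j.isLt; simp [h] at this)
    have hR : i.val / m < m ^ k :=
      (Nat.div_lt_iff_lt_mul hm).2 (by rw [← pow_succ]; exact i.isLt)
    have hC : j.val / n < n ^ k :=
      (Nat.div_lt_iff_lt_mul hn).2 (by rw [← pow_succ]; exact j.isLt)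
    have hmodnat : (finCongr (pow_succ n k) j).modNat
        = (⟨j.val % n, Nat.mod_lt _ hn⟩ : Fin n) := rfl
    have hdivnat : (finCongr (pow_succ n k) j).divNat
        = (⟨j.val / n, hC⟩ : Fin (n^k)) := rfl
    have hval := colPerm_succ_val σ k j
    rw [hmodnat, hdivnat] at hval
    have hdiv : ((colPerm σ k ⟨j.val / n, hC⟩ : Fin (n^k)) : ℕ)
        = (colPerm σ (k+1) j).val / n := by
      rw [hval, Nat.add_mul_div_left _ _ hn, Nat.div_eq_of_lt (σ _).isLt, Nat.zero_add]
    have hmod : ((σ ⟨j.val % n, Nat.mod_lt _ hn⟩ : Fin n) : ℕ)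
        = (colPerm σ (k+1) j).val % n := by
      rw [hval, Nat.add_mul_mod_self_left, Nat.mod_eq_of_lt (σ _).isLt]
    rw [morphIter_succ (fun i j => A i (σ j)) (fun i j => B i (σ j)) k i j
          ⟨i.val / m, hR⟩ ⟨j.val / n, hC⟩ ⟨i.val % m, Nat.mod_lt _ hm⟩
          ⟨j.val % n, Nat.mod_lt _ hn⟩ rfl rfl rfl rfl,
        morphIter_succ A B k i (colPerm σ (k+1) j)
          ⟨i.val / m, hR⟩ (colPerm σ k ⟨j.val / n, hC⟩) ⟨i.val % m, Nat.mod_lt _ hm⟩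
          (σ ⟨j.val % n, Nat.mod_lt _ hn⟩) rfl hdiv rfl hmod,
        morphIter_perm A B σ k]

lemma wordRepresentable_of_equiv {V V' : Type*} [DecidableEq V] [DecidableEq V'] (e : V ≃ V')
    {G : SimpleGraph V} {G' : SimpleGraph V'}
    (h : ∀ x y, G.Adj x y ↔ G'.Adj (e x) (e y)) :
    WordRepresentable G → WordRepresentable G' := by
  rintro ⟨w, hw1, hw2⟩
  refine ⟨w.map e, fun v => ?_, fun x y hxy => ?_⟩
  · exact List.mem_map.2 ⟨e.symm v, hw1 _, e.apply_symm_apply v⟩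
  · have hfe : (w.map e).filter (fun z => z == x || z == y)
        = (w.filter (fun z => z == e.symm x || z == e.symm y)).map e := by
      rw [List.filter_map]
      refine congrArg _ (List.filter_congr fun z _ => ?_)
      simp only [Function.comp_apply]
      rw [Bool.eq_iff_iff]
      simp [Equiv.apply_eq_iff_eq_symm_apply]
    have hadj : G'.Adj x y ↔ G.Adj (e.symm x) (e.symm y) := by
      rw [h (e.symm x) (e.symm y)]; simp
    rw [hadj, hw2 (e.symm x) (e.symm y) (fun hc => hxy (by simpa using congrArg e hc)),
      hfe, List.Chain', List.Chain', List.isChain_map]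
    constructor <;> exact fun hc => hc.imp (by intro a b; simp)

theorem stmt8 {m n : ℕ} (A B : Fin m → Fin n → Bool)
    (σ : Equiv.Perm (Fin n)) (k : ℕ) :
    WordRepresentable (Gk A B k) ↔
      WordRepresentable (Gk (fun i j => A i (σ j)) (fun i j => B i (σ j)) k) := by
  set τ := colPerm σ k with hτ
  set e : (Fin (n^k) ⊕ Fin (m^k)) ≃ (Fin (n^k) ⊕ Fin (m^k)) :=
    Equiv.sumCongr τ.symm (Equiv.refl _) with he
  have key : ∀ x y, (Gk A B k).Adj x y ↔
      (Gk (fun i j => A i (σ j)) (fun i j => B i (σ j)) k).Adj (e x) (e y) := by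
    intro x y
    cases x <;> cases y <;>
      simp [Gk, splitGraph, SimpleGraph.fromRel_adj, he, morphIter_perm, hτ]
  refine ⟨wordRepresentable_of_equiv e key, wordRepresentable_of_equiv e.symm fun x y => ?_⟩
  rw [key (e.symm x) (e.symm y)]
  simp
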